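/- Consider the Fourier system z_n′ = −(n²/2) z_n + (Kn/2)(z₁ z_{n−1} − z̄₁ z_{n+1}), z₀ ≡ 1, with |z_n(t)| ≤ 1 for all n and t. Writing z₁ = ρ₁ e^{iθ₁} and z₂ = ρ₂ e^{iθ₂}, one has ρ₁′ = −(1/2)ρ₁ + (K/2)ρ₁[1 − ρ₂ cos(θ₂ − 2θ₁)]; in particular, if ρ₂(t) ≤ δ for all t ∈ [0,T] and K(1−δ) > 1, then ρ₁(t) ≥ ρ₁(0) e^{(1/2)(K(1−δ)−1) t} for t ∈ [0,T]. -/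

import Mathlib

open Real Complex

theorem stmt4 (K : ℝ) (z : ℕ → ℝ → ℂ) (ρ₁ ρ₂ θ₁ θ₂ : ℝ → ℝ) (ρ₁' : ℝ → ℝ)
    (hz0 : ∀ t, z 0 t = 1)
    (hODE : ∀ n : ℕ, 1 ≤ n → ∀ t : ℝ,
      HasDerivAt (z n)
        (-((n : ℂ) ^ 2 / 2) * z n t +
          (K * n / 2) * (z 1 t * z (n - 1) t - (starRingEnd ℂ) (z 1 t) * z (n + 1) t)) t)
    (hbound : ∀ n t, ‖z n t‖ ≤ 1)
    (hpolar1 : ∀ t, z 1 t = (ρ₁ t : ℂ) * Complex.exp ((θ₁ t : ℂ) * Complex.I))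
    (hpolar2 : ∀ t, z 2 t = (ρ₂ t : ℂ) * Complex.exp ((θ₂ t : ℂ) * Complex.I))
    (hρ₁ : ∀ t, ρ₁ t = ‖z 1 t‖)
    (hρ₂ : ∀ t, ρ₂ t = ‖z 2 t‖)
    (hρ₁' : ∀ t, HasDerivAt ρ₁ (ρ₁' t) t) :
    (∀ t, ρ₁' t =
      -(1 / 2) * ρ₁ t + (K / 2) * ρ₁ t * (1 - ρ₂ t * Real.cos (θ₂ t - 2 * θ₁ t))) ∧
    ∀ δ T : ℝ, 0 < T → (∀ t ∈ Set.Icc (0:ℝ) T, ρ₂ t ≤ δ) → 1 < K * (1 - δ) →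
      ∀ t ∈ Set.Icc (0:ℝ) T,
        ρ₁ t ≥ ρ₁ 0 * Real.exp ((1 / 2) * (K * (1 - δ) - 1) * t) := by
  -- basic positivity and bounds
  have hρ₁nn : ∀ t, 0 ≤ ρ₁ t := fun t => (hρ₁ t) ▸ (norm_nonneg _)
  have hρ₁le : ∀ t, ρ₁ t ≤ 1 := fun t => (hρ₁ t) ▸ hbound 1 t
  have hρ₂nn : ∀ t, 0 ≤ ρ₂ t := fun t => (hρ₂ t) ▸ (norm_nonneg _)
  have hρ₂le : ∀ t, ρ₂ t ≤ 1 := fun t => (hρ₂ t) ▸ hbound 2 t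
  -- the n = 1 equation, rewritten
  have hw : ∀ t : ℝ, HasDerivAt (z 1)
      (((-(1/2) : ℝ) : ℂ) * z 1 t + ((K/2 : ℝ) : ℂ) * (z 1 t - (starRingEnd ℂ) (z 1 t) * z 2 t)) t := by
    intro t
    convert hODE 1 le_rfl t using 1
    rw [hz0]
    push_cast
    ring
  -- the key identity for the derivative of ρ₁²
  have hmain : ∀ t : ℝ, ρ₁' t * ρ₁ t + ρ₁ t * ρ₁' t
      = (ρ₁ t)^2 * (K - 1 - K * ρ₂ t * Real.cos (θ₂ t - 2 * θ₁ t)) := by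
    intro t
    set W : ℂ := ((-(1/2) : ℝ) : ℂ) * z 1 t + ((K/2 : ℝ) : ℂ) * (z 1 t - (starRingEnd ℂ) (z 1 t) * z 2 t) with hW
    have hre : HasDerivAt (fun s => (z 1 s).re) W.re t := by
      exact Complex.reCLM.hasFDerivAt.comp_hasDerivAt t (hw t)
    have him : HasDerivAt (fun s => (z 1 s).im) W.im t := by
      exact Complex.imCLM.hasFDerivAt.comp_hasDerivAt t (hw t)
    have h2 : HasDerivAt (fun s => (z 1 s).re * (z 1 s).re + (z 1 s).im * (z 1 s).im)
        ((W.re * (z 1 t).re + (z 1 t).re * W.re) + (W.im * (z 1 t).im + (z 1 t).im * W.im)) t :=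
      (hre.mul hre).add (him.mul him)
    have hEq : (fun s => ρ₁ s * ρ₁ s) = fun s => (z 1 s).re * (z 1 s).re + (z 1 s).im * (z 1 s).im := by
      funext s
      rw [hρ₁, ← sq, ← Complex.normSq_eq_norm_sq, Complex.normSq_apply]
    have h1 : HasDerivAt (fun s => ρ₁ s * ρ₁ s) (ρ₁' t * ρ₁ t + ρ₁ t * ρ₁' t) t := (hρ₁' t).mul (hρ₁' t)
    rw [hEq] at h1
    have huniq := h1.unique h2
    rw [huniq, hW]
    have h1re : (z 1 t).re = ρ₁ t * Real.cos (θ₁ t) := by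
      rw [hpolar1]; simp [Complex.exp_mul_I, Complex.cos_ofReal_re, Complex.sin_ofReal_re]
    have h1im : (z 1 t).im = ρ₁ t * Real.sin (θ₁ t) := by
      rw [hpolar1]; simp [Complex.exp_mul_I, Complex.cos_ofReal_re, Complex.sin_ofReal_re]
    have h2re : (z 2 t).re = ρ₂ t * Real.cos (θ₂ t) := by
      rw [hpolar2]; simp [Complex.exp_mul_I, Complex.cos_ofReal_re, Complex.sin_ofReal_re]
    have h2im : (z 2 t).im = ρ₂ t * Real.sin (θ₂ t) := by
      rw [hpolar2]; simp [Complex.exp_mul_I, Complex.cos_ofReal_re, Complex.sin_ofReal_re]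
    simp only [Complex.add_re, Complex.add_im, Complex.mul_re, Complex.mul_im,
      Complex.sub_re, Complex.sub_im, Complex.ofReal_re, Complex.ofReal_im,
      Complex.conj_re, Complex.conj_im, h1re, h1im, h2re, h2im]
    rw [Real.cos_sub, Real.cos_two_mul', Real.sin_two_mul]
    linear_combination (ρ₁ t ^ 2 * (K - 1)) * Real.sin_sq_add_cos_sq (θ₁ t)
  -- Part 1
  have part1 : ∀ t, ρ₁' t =
      -(1 / 2) * ρ₁ t + (K / 2) * ρ₁ t * (1 - ρ₂ t * Real.cos (θ₂ t - 2 * θ₁ t)) := by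
    intro t
    by_cases h : ρ₁ t = 0
    · have hmin : IsLocalMin ρ₁ t :=
        Filter.Eventually.of_forall (fun s => by rw [h]; exact hρ₁nn s)
      rw [hmin.hasDerivAt_eq_zero (hρ₁' t), h]
      ring
    · have h2 : (2 : ℝ) * ρ₁ t ≠ 0 := mul_ne_zero two_ne_zero h
      apply mul_left_cancel₀ h2
      linear_combination hmain t
  refine ⟨part1, ?_⟩
  -- Part 2
  intro δ T hT hδ hK
  -- u = ρ₁² and its derivative
  set u : ℝ → ℝ := fun t => ρ₁ t * ρ₁ t with hu_def
  have hu : ∀ t, HasDerivAt u (ρ₁' t * ρ₁ t + ρ₁ t * ρ₁' t) t := fun t => (hρ₁' t).mul (hρ₁' t)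
  have hunn : ∀ t, 0 ≤ u t := fun t => mul_nonneg (hρ₁nn t) (hρ₁nn t)
  have hule : ∀ t, u t ≤ 1 := fun t => by
    have := mul_le_mul (hρ₁le t) (hρ₁le t) (hρ₁nn t) zero_le_one
    simpa using this
  have hcosle : ∀ t, ρ₂ t * Real.cos (θ₂ t - 2 * θ₁ t) ≤ ρ₂ t := fun t => by
    calc ρ₂ t * Real.cos (θ₂ t - 2 * θ₁ t) ≤ ρ₂ t * 1 :=
          mul_le_mul_of_nonneg_left (Real.cos_le_one _) (hρ₂nn t)
      _ = ρ₂ t := mul_one _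
  by_cases hKpos : 0 ≤ K
  · -- main case: Grönwall on [0, T]
    set a : ℝ := K * (1 - δ) - 1 with ha_def
    set v : ℝ → ℝ := fun t => u t * Real.exp (-(a * t)) with hv_def
    have hv : ∀ t, HasDerivAt v
        ((ρ₁' t * ρ₁ t + ρ₁ t * ρ₁' t) * Real.exp (-(a * t)) + -(u t * (Real.exp (-(a * t)) * a))) t := by
      intro t
      have h := (hu t).mul (((hasDerivAt_id t).const_mul (-a)).exp)
      simp at h; exact h
    have hv' : ∀ t ∈ Set.Icc (0:ℝ) T, 0 ≤ deriv v t := by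
      intro t ht
      rw [(hv t).deriv]
      have hg : a * u t ≤ (ρ₁' t * ρ₁ t + ρ₁ t * ρ₁' t) := by
        rw [hmain t]
        have h1 : ρ₂ t * Real.cos (θ₂ t - 2 * θ₁ t) ≤ δ := le_trans (hcosle t) (hδ t ht)
        have h2 : K * (ρ₂ t * Real.cos (θ₂ t - 2 * θ₁ t)) ≤ K * δ :=
          mul_le_mul_of_nonneg_left h1 hKpos
        have h3 : a ≤ K - 1 - K * ρ₂ t * Real.cos (θ₂ t - 2 * θ₁ t) := by
          rw [ha_def]; nlinarith
        have := mul_le_mul_of_nonneg_left h3 (hunn t)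
        calc a * u t = u t * a := mul_comm _ _
          _ ≤ u t * (K - 1 - K * ρ₂ t * Real.cos (θ₂ t - 2 * θ₁ t)) := this
          _ = (ρ₁ t)^2 * (K - 1 - K * ρ₂ t * Real.cos (θ₂ t - 2 * θ₁ t)) := by
              rw [hu_def]; ring
      have hexp : 0 < Real.exp (-(a * t)) := Real.exp_pos _
      have := sub_nonneg.mpr hg
      calc (0:ℝ) ≤ ((ρ₁' t * ρ₁ t + ρ₁ t * ρ₁' t) - a * u t) * Real.exp (-(a * t)) :=
            mul_nonneg this hexp.le
        _ = (ρ₁' t * ρ₁ t + ρ₁ t * ρ₁' t) * Real.exp (-(a * t)) + -(u t * (Real.exp (-(a * t)) * a)) := by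
            ring
    have hmono : MonotoneOn v (Set.Icc 0 T) := by
      apply monotoneOn_of_deriv_nonneg (convex_Icc 0 T)
      · exact fun t _ => ((hv t).continuousAt).continuousWithinAt
      · intro t ht
        exact ((hv t).differentiableAt).differentiableWithinAt
      · intro t ht
        exact hv' t (interior_subset ht)
    intro t ht
    have h0mem : (0:ℝ) ∈ Set.Icc (0:ℝ) T := ⟨le_rfl, hT.le⟩
    have hvle := hmono h0mem ht ht.1
    have hv0 : v 0 = u 0 := by simp [hv_def]
    have hut : u 0 * Real.exp (a * t) ≤ u t := by
      have : u 0 ≤ u t * Real.exp (-(a * t)) := by rw [← hv0]; exact hvle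
      have hexp : 0 < Real.exp (a * t) := Real.exp_pos _
      calc u 0 * Real.exp (a * t) ≤ (u t * Real.exp (-(a * t))) * Real.exp (a * t) :=
            mul_le_mul_of_nonneg_right this hexp.le
        _ = u t * Real.exp (-(a * t) + a * t) := by rw [mul_assoc, ← Real.exp_add]
        _ = u t := by simp
    -- take square roots
    have e2 : Real.exp ((1/2) * a * t) * Real.exp ((1/2) * a * t) = Real.exp (a * t) := by
      rw [← Real.exp_add]; congr 1; ring
    have hsq : (ρ₁ 0 * Real.exp ((1/2) * a * t))^2 ≤ (ρ₁ t)^2 := by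
      have hexpand : (ρ₁ 0 * Real.exp ((1/2) * a * t))^2
          = (ρ₁ 0 * ρ₁ 0) * (Real.exp ((1/2) * a * t) * Real.exp ((1/2) * a * t)) := by ring
      rw [hexpand, e2]
      calc (ρ₁ 0 * ρ₁ 0) * Real.exp (a * t) = u 0 * Real.exp (a * t) := rfl
        _ ≤ u t := hut
        _ = (ρ₁ t)^2 := by rw [hu_def]; ring
    have hL : 0 ≤ ρ₁ 0 * Real.exp ((1/2) * a * t) :=
      mul_nonneg (hρ₁nn 0) (Real.exp_pos _).le
    have hfin := Real.sqrt_le_sqrt hsq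
    rw [Real.sqrt_sq hL, Real.sqrt_sq (hρ₁nn t)] at hfin
    exact hfin
  · -- K < 0 : show ρ₁ 0 = 0, then the bound is trivial
    push_neg at hKpos
    have h00 : ρ₁ 0 = 0 := by
      by_contra h0
      have hρ0pos : 0 < ρ₁ 0 := lt_of_le_of_ne (hρ₁nn 0) (Ne.symm h0)
      have hu0pos : 0 < u 0 := mul_pos hρ0pos hρ0pos
      -- w t = u t * exp t is antitone
      set w : ℝ → ℝ := fun t => u t * Real.exp t with hw_def
      have hwD : ∀ t, HasDerivAt w
          ((ρ₁' t * ρ₁ t + ρ₁ t * ρ₁' t) * Real.exp t + u t * Real.exp t) t := by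
        intro t
        exact (hu t).mul (Real.hasDerivAt_exp t)
      have hanti : Antitone w := by
        apply antitone_of_deriv_nonpos
        · exact fun t => (hwD t).differentiableAt
        · intro t
          rw [(hwD t).deriv]
          have hg : (ρ₁' t * ρ₁ t + ρ₁ t * ρ₁' t) ≤ -u t := by
            rw [hmain t]
            have h1 : ρ₂ t * Real.cos (θ₂ t - 2 * θ₁ t) ≤ 1 := le_trans (hcosle t) (hρ₂le t)
            have h2 : K - 1 - K * ρ₂ t * Real.cos (θ₂ t - 2 * θ₁ t) ≤ -1 := by nlinarith
            have := mul_le_mul_of_nonneg_left h2 (hunn t)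
            calc (ρ₁ t)^2 * (K - 1 - K * ρ₂ t * Real.cos (θ₂ t - 2 * θ₁ t))
                = u t * (K - 1 - K * ρ₂ t * Real.cos (θ₂ t - 2 * θ₁ t)) := by rw [hu_def]; ring
              _ ≤ u t * (-1) := this
              _ = -u t := by ring
          have hexp : 0 < Real.exp t := Real.exp_pos _
          nlinarith
      set s : ℝ := 1 - Real.log (u 0) with hs_def
      have hs0 : 0 ≤ s := by
        have : Real.log (u 0) ≤ 0 := Real.log_nonpos (hunn 0) (hule 0)
        rw [hs_def]; linarith
      have hws := hanti (neg_nonpos_of_nonneg hs0 : -s ≤ 0)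
      -- w 0 ≤ w (-s)
      have : u 0 ≤ u (-s) * Real.exp (-s) := by
        have h1 : w 0 = u 0 := by simp [hw_def]
        rw [← h1]; simpa [hw_def] using hws
      have hexps : Real.exp (-s) = u 0 * Real.exp (-1) := by
        rw [hs_def]
        rw [show -(1 - Real.log (u 0)) = Real.log (u 0) + (-1) by ring, Real.exp_add,
          Real.exp_log hu0pos]
      have hbad : u 0 ≤ u 0 * Real.exp (-1) := by
        calc u 0 ≤ u (-s) * Real.exp (-s) := this
          _ ≤ 1 * Real.exp (-s) := by
              exact mul_le_mul_of_nonneg_right (hule (-s)) (Real.exp_pos _).le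
          _ = u 0 * Real.exp (-1) := by rw [one_mul, hexps]
      have : Real.exp (-1) < 1 := by
        rw [Real.exp_lt_one_iff]; norm_num
      nlinarith
    intro t ht
    have : ρ₁ 0 * Real.exp ((1/2) * (K * (1 - δ) - 1) * t) = 0 := by rw [h00]; ring
    rw [ge_iff_le, this]
    exact hρ₁nn t
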